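/- Let K and L be number fields with rings of integers 𝒪_K and 𝒪_L, and suppose that the number of ℚ-algebra homomorphisms from K to L equals [K:ℚ]. Let d_K ∈ ℤ be the discriminant of K. Consider the 𝒪_L-algebra homomorphism Φ : 𝒪_L ⊗_ℤ 𝒪_K → ∏_{σ : K →_ℚ L} 𝒪_L determined by l ⊗ k ↦ (l·σ(k))_σ (each σ maps 𝒪_K into 𝒪_L). Then Φ becomes an isomorphism after inverting d_K: the induced map ℤ[1/d_K] ⊗_ℤ (𝒪_L ⊗_ℤ 𝒪_K) → ℤ[1/d_K] ⊗_ℤ ∏_{σ} 𝒪_L is bijective. -/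

import Mathlib

open scoped TensorProduct
open NumberField

section helpers

variable {K L : Type*} [Field K] [NumberField K] [Field L] [NumberField L]

private lemma trace_eq_sum_hom (h : Nat.card (K →ₐ[ℚ] L) = Module.finrank ℚ K) (y : K) :
    algebraMap ℚ L (Algebra.trace ℚ K y) = ∑ σ : K →ₐ[ℚ] L, σ y := by
  set E := AlgebraicClosure L
  have hinj : Function.Injective (algebraMap L E) := (algebraMap L E).injective
  apply hinj
  have card1 : Fintype.card (K →ₐ[ℚ] E) = Module.finrank ℚ K := AlgHom.card ℚ K E
  set c : (K →ₐ[ℚ] L) → (K →ₐ[ℚ] E) := fun σ => (IsScalarTower.toAlgHom ℚ L E).comp σ with hc_def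
  have hc : Function.Injective c := by
    intro σ τ hst
    ext x
    have := congrArg (fun f => f x) hst
    exact hinj this
  have hbij : Function.Bijective c :=
    (Fintype.bijective_iff_injective_and_card c).2
      ⟨hc, by rw [card1, ← h, Nat.card_eq_fintype_card]⟩
  calc algebraMap L E (algebraMap ℚ L (Algebra.trace ℚ K y))
      = algebraMap ℚ E (Algebra.trace ℚ K y) := by
        rw [← IsScalarTower.algebraMap_apply]
    _ = ∑ τ : K →ₐ[ℚ] E, τ y := trace_eq_sum_embeddings E
    _ = ∑ σ : K →ₐ[ℚ] L, c σ y := (Fintype.sum_bijective c hbij _ _ (fun σ => rfl)).symm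
    _ = algebraMap L E (∑ σ : K →ₐ[ℚ] L, σ y) := by rw [map_sum]; rfl

private lemma trace_int_eq_sum_hom (h : Nat.card (K →ₐ[ℚ] L) = Module.finrank ℚ K) (x : 𝓞 K) :
    algebraMap ℤ (𝓞 L) (Algebra.trace ℤ (𝓞 K) x)
      = ∑ σ : K →ₐ[ℚ] L, RingOfIntegers.mapRingHom σ x := by
  apply RingOfIntegers.coe_injective
  have key := trace_eq_sum_hom h (algebraMap (𝓞 K) K x)
  have h1 : algebraMap (𝓞 L) L (algebraMap ℤ (𝓞 L) (Algebra.trace ℤ (𝓞 K) x))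
      = algebraMap ℚ L ((Algebra.trace ℤ (𝓞 K) x : ℤ) : ℚ) := by
    simp [map_intCast]
  rw [h1, Algebra.coe_trace_int, key, map_sum]
  rfl

end helpers

set_option maxHeartbeats 1000000 in
set_option synthInstance.maxHeartbeats 200000 in
/-- Let `K`, `L` be number fields such that the number of `ℚ`-algebra homomorphisms
`K → L` equals `[K:ℚ]`, and let `d_K` be the discriminant of `K`. Then the
`𝒪_L`-algebra homomorphism `Φ : 𝒪_L ⊗_ℤ 𝒪_K → ∏_{σ : K →_ℚ L} 𝒪_L` determined by
`l ⊗ k ↦ (l·σ(k))_σ` becomes an isomorphism after inverting `d_K`: the map obtained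
from `Φ` by base change along `ℤ → ℤ[1/d_K]` is bijective. -/
theorem ringOfIntegers_tensor_bijective_away_discr
    (K L : Type*) [Field K] [NumberField K] [Field L] [NumberField L]
    (h : Nat.card (K →ₐ[ℚ] L) = Module.finrank ℚ K)
    (Φ : ((𝓞 L) ⊗[ℤ] (𝓞 K)) →ₐ[𝓞 L] ((K →ₐ[ℚ] L) → 𝓞 L))
    (hΦ : ∀ (l : 𝓞 L) (k : 𝓞 K),
        Φ (l ⊗ₜ[ℤ] k) = fun (σ : K →ₐ[ℚ] L) => l * RingOfIntegers.mapRingHom σ.toRingHom k) :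
    Function.Bijective
      (Algebra.TensorProduct.map
        (AlgHom.id ℤ (Localization.Away (discr K)))
        Φ.toRingHom.toIntAlgHom) := by
  classical
  set A := Localization.Away (discr K) with hA
  let ι := (K →ₐ[ℚ] L)
  let R := 𝓞 L
  let κ := Module.Free.ChooseBasisIndex ℤ (𝓞 K)
  let b : Module.Basis κ ℤ (𝓞 K) := RingOfIntegers.basis K
  have hb : b = RingOfIntegers.basis K := rfl
  -- the index equivalence
  have hcard : Fintype.card κ = Fintype.card ι := by
    rw [← Module.finrank_eq_card_chooseBasisIndex, RingOfIntegers.rank, ← h,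
      Nat.card_eq_fintype_card]
  let e : κ ≃ ι := Fintype.equivOfCardEq hcard
  -- bases over R
  let bT : Module.Basis κ R (R ⊗[ℤ] 𝓞 K) := Algebra.TensorProduct.basis R b
  let bP : Module.Basis κ R (ι → R) := (Pi.basisFun R ι).reindex e.symm
  let F : (R ⊗[ℤ] 𝓞 K) →ₗ[R] (ι → R) := Φ.toLinearMap
  let N : Matrix κ κ R := LinearMap.toMatrix bT bP F
  -- compute the matrix
  have hN : ∀ i j, N i j = RingOfIntegers.mapRingHom (e i) (b j) := by
    intro i j
    have : F (bT j) = fun σ : K →ₐ[ℚ] L => RingOfIntegers.mapRingHom (σ : K →+* L) (b j) := by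
      simp only [F, bT, Algebra.TensorProduct.basis_apply, AlgHom.toLinearMap_apply]
      rw [hΦ]
      funext σ
      exact one_mul _
    simp only [N, LinearMap.toMatrix_apply, this, bP, Module.Basis.repr_reindex_apply,
      Equiv.symm_symm, Pi.basisFun_repr]
  -- determinant squared equals the discriminant
  have hdet : algebraMap ℤ R (discr K) = N.det ^ 2 := by
    have hmat : (Algebra.traceMatrix ℤ b).map (algebraMap ℤ R) = N.transpose * N := by
      ext i j
      rw [Matrix.map_apply, Algebra.traceMatrix_apply, Algebra.traceForm_apply,
        trace_int_eq_sum_hom h, Matrix.mul_apply]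
      rw [← Equiv.sum_comp e (fun σ : K →ₐ[ℚ] L => RingOfIntegers.mapRingHom (σ : K →+* L) (b i * b j))]
      congr 1
      exact Finset.sum_congr rfl fun k _ => by rw [Matrix.transpose_apply, hN, hN, map_mul]
    have h2 : algebraMap ℤ R (Algebra.discr ℤ b) = (N.transpose * N).det := by
      rw [Algebra.discr_def, RingHom.map_det, RingHom.mapMatrix_apply, hmat]
    rw [NumberField.discr, ← hb, h2, Matrix.det_mul, Matrix.det_transpose, pow_two]
  -- the quasi-inverse G
  let G : (ι → R) →ₗ[R] (R ⊗[ℤ] 𝓞 K) := Matrix.toLin bP bT (N.det • N.adjugate)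
  have hG : G = Matrix.toLin bP bT (N.det • N.adjugate) := rfl
  have hFG : ∀ y, F (G y) = algebraMap ℤ R (discr K) • y := by
    intro y
    have hF : F = Matrix.toLin bT bP N := (Matrix.toLin_toMatrix bT bP F).symm
    rw [hF, hG, ← Matrix.toLin_mul_apply, Matrix.mul_smul, Matrix.mul_adjugate, smul_smul,
      ← pow_two, ← hdet, map_smul, Matrix.toLin_one, LinearMap.smul_apply, LinearMap.id_apply]
  have hGF : ∀ x, G (F x) = algebraMap ℤ R (discr K) • x := by
    intro x
    have hF : F = Matrix.toLin bT bP N := (Matrix.toLin_toMatrix bT bP F).symm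
    rw [hF, hG, ← Matrix.toLin_mul_apply, Matrix.smul_mul, Matrix.adjugate_mul, smul_smul,
      ← pow_two, ← hdet, map_smul, Matrix.toLin_one, LinearMap.smul_apply, LinearMap.id_apply]
  -- pass to ℤ-linear maps and base change
  let Fz : (R ⊗[ℤ] 𝓞 K) →ₗ[ℤ] (ι → R) := F.restrictScalars ℤ
  let Gz : (ι → R) →ₗ[ℤ] (R ⊗[ℤ] 𝓞 K) := G.restrictScalars ℤ
  have hFGz : Fz ∘ₗ Gz = (discr K : ℤ) • LinearMap.id := by
    ext y
    simp only [LinearMap.comp_apply, LinearMap.restrictScalars_apply, LinearMap.smul_apply,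
      LinearMap.id_apply, Fz, Gz]
    rw [hFG, algebraMap_smul]
  have hGFz : Gz ∘ₗ Fz = (discr K : ℤ) • LinearMap.id := by
    refine LinearMap.ext fun x => ?_
    simp only [LinearMap.comp_apply, LinearMap.restrictScalars_apply, LinearMap.smul_apply,
      LinearMap.id_apply, Fz, Gz]
    rw [hGF, algebraMap_smul]
  -- the discriminant is invertible in A
  have hunit : IsUnit (algebraMap ℤ A (discr K)) :=
    IsLocalization.Away.algebraMap_isUnit (discr K)
  obtain ⟨u, hu⟩ := hunit
  rw [eq_comm] at hu
  -- identify the goal map with the base change of Fz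
  have hcoe : ⇑(Algebra.TensorProduct.map (AlgHom.id ℤ A) Φ.toRingHom.toIntAlgHom)
      = ⇑(Fz.baseChange A) := by
    funext x
    induction x using TensorProduct.induction_on with
    | zero => rw [map_zero]; exact ((Fz.baseChange A).map_zero).symm
    | tmul a m => simp [Fz, F]
    | add x y hx hy =>
        rw [map_add, (Fz.baseChange A).map_add, hx, hy]
  rw [hcoe]
  -- conclude bijectivity
  have hcomp1 : (Fz.baseChange A) ∘ₗ (Gz.baseChange A) = (discr K : ℤ) • LinearMap.id := by
    rw [← LinearMap.baseChange_comp, hFGz, LinearMap.baseChange_smul, LinearMap.baseChange_id]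
  have hcomp2 : (Gz.baseChange A) ∘ₗ (Fz.baseChange A) = (discr K : ℤ) • LinearMap.id := by
    rw [← LinearMap.baseChange_comp, hGFz, LinearMap.baseChange_smul, LinearMap.baseChange_id]
  have hbij1 : Function.Bijective ⇑((Fz.baseChange A) ∘ₗ (Gz.baseChange A)) := by
    have hfun : ⇑((Fz.baseChange A) ∘ₗ (Gz.baseChange A))
        = fun x => (u : A) • x := by
      rw [hcomp1]
      funext y
      rw [LinearMap.smul_apply, LinearMap.id_apply, ← hu, algebraMap_smul]
    rw [hfun]
    exact (LinearEquiv.smulOfUnit (M := _) u).bijective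
  have hbij2 : Function.Bijective ⇑((Gz.baseChange A) ∘ₗ (Fz.baseChange A)) := by
    have hfun : ⇑((Gz.baseChange A) ∘ₗ (Fz.baseChange A))
        = fun x => (u : A) • x := by
      rw [hcomp2]
      funext y
      rw [LinearMap.smul_apply, LinearMap.id_apply, ← hu, algebraMap_smul]
    rw [hfun]
    exact (LinearEquiv.smulOfUnit (M := _) u).bijective
  constructor
  · exact Function.Injective.of_comp (f := ⇑(Gz.baseChange A)) (by
      simpa [Function.comp_def] using hbij2.1)
  · exact Function.Surjective.of_comp (g := ⇑(Gz.baseChange A)) (by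
      simpa [Function.comp_def] using hbij1.2)
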